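/- Let G be a finitely generated group with finitely generated subgroups H and K, let X be a nontrivial H-almost invariant subset of G and let Y be a nontrivial K-almost invariant subset of G. Then the set {g ∈ G : gX and Y are not nested} is contained in finitely many double cosets KgH; that is, there is a finite subset F of G such that every g ∈ G for which gX and Y are not nested can be written g = k·f·h with k ∈ K, f ∈ F and h ∈ H. -/

import Mathlib

section Defs

variable {G : Type*} [Group G]

/-- `W` is `H`-finite: contained in finitely many left cosets `Hg` of `H` in `G`. -/
def HFinite (H : Subgroup G) (W : Set G) : Prop :=
  ∃ F : Finset G, W ⊆ ⋃ g ∈ F, (· * g) '' (H : Set G)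

/-- The left translate `gX` of a subset `X` of `G`. -/
def leftTr (g : G) (X : Set G) : Set G := (g * ·) '' X

/-- `X` is an `H`-almost invariant subset of `G`: `HX = X` and for every `g` the
symmetric difference of `X` and `Xg` is `H`-finite. -/
def AlmostInv (H : Subgroup G) (X : Set G) : Prop :=
  (∀ h ∈ H, leftTr h X = X) ∧ ∀ g : G, HFinite H (symmDiff X ((· * g) '' X))

/-- `X` is a nontrivial `H`-almost invariant subset of `G`. -/
def NontrivialAI (H : Subgroup G) (X : Set G) : Prop :=
  AlmostInv H X ∧ ¬ HFinite H X ∧ ¬ HFinite H Xᶜ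

/-- `Y` crosses the `H`-almost invariant set `X`: none of the four corner sets is `H`-finite. -/
def Crosses (H : Subgroup G) (X Y : Set G) : Prop :=
  ¬ HFinite H (X ∩ Y) ∧ ¬ HFinite H (X ∩ Yᶜ) ∧ ¬ HFinite H (Xᶜ ∩ Y) ∧ ¬ HFinite H (Xᶜ ∩ Yᶜ)

/-- The coboundary `∂Y` of `Y` with respect to a finite generating set `S`. -/
def bdry (S : Finset G) (Y : Set G) : Set G :=
  {g : G | ∃ s ∈ (S : Set G) ∪ (S : Set G)⁻¹, (g ∈ Y) ≠ (g * s ∈ Y)}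

/-- `Y` crosses the `H`-almost invariant set `X` strongly: neither `∂Y ∩ X` nor
`∂Y ∩ X*` is `H`-finite. -/
def CrossesStrongly (S : Finset G) (H : Subgroup G) (X Y : Set G) : Prop :=
  ¬ HFinite H (bdry S Y ∩ X) ∧ ¬ HFinite H (bdry S Y ∩ Xᶜ)

/-- Two subsets of `G` are nested if one of the four corner sets is empty. -/
def Nested (U V : Set G) : Prop :=
  U ∩ V = ∅ ∨ U ∩ Vᶜ = ∅ ∨ Uᶜ ∩ V = ∅ ∨ Uᶜ ∩ Vᶜ = ∅

/-- The conjugate subgroup `gHg⁻¹`. -/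
def conjSub (g : G) (H : Subgroup G) : Subgroup G :=
  Subgroup.map (MulAut.conj g).toMonoidHom H

/-- A subgroup is two-ended if it contains an infinite cyclic subgroup of finite index. -/
def TwoEnded (H : Subgroup G) : Prop :=
  ∃ z : G, z ∈ H ∧ ¬ IsOfFinOrder z ∧ (Subgroup.zpowers z).relIndex H ≠ 0

/-- `G` is one-ended: `G` is infinite and every almost invariant subset of `G` (over the
trivial group) is finite or cofinite. -/
def OneEnded (G : Type*) [Group G] : Prop :=
  Infinite G ∧ ∀ X : Set G,
    (∀ g : G, (symmDiff X ((· * g) '' X)).Finite) → X.Finite ∨ Xᶜ.Finite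

/-- `G` is finitely presented. -/
def FinitelyPresentedGroup (G : Type*) [Group G] : Prop :=
  ∃ (n : ℕ) (R : Finset (FreeGroup (Fin n))),
    Nonempty (G ≃* FreeGroup (Fin n) ⧸ Subgroup.normalClosure (R : Set (FreeGroup (Fin n))))

/-- `Q(H)`: the collection of subsets of `G` which are almost invariant over some subgroup
commensurable with `H`. -/
def QH (H : Subgroup G) : Set (Set G) :=
  {X : Set G | ∃ K : Subgroup G, Subgroup.Commensurable K H ∧ AlmostInv K X}

/-- The Boolean algebra of subsets of `G` generated by a family `S` of subsets: the smallest
family containing `S` closed under complementation, finite intersections and finite unions. -/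
inductive BoolGen (S : Set (Set G)) : Set G → Prop
  | basic {U : Set G} : U ∈ S → BoolGen S U
  | compl {U : Set G} : BoolGen S U → BoolGen S Uᶜ
  | inter {U V : Set G} : BoolGen S U → BoolGen S V → BoolGen S (U ∩ V)
  | union {U V : Set G} : BoolGen S U → BoolGen S V → BoolGen S (U ∪ V)

/-- A subgroup is virtually free abelian of rank `m` if it has a finite index subgroup
isomorphic to `ℤ^m`. -/
def VirtuallyFreeAbelian (H : Subgroup G) (m : ℕ) : Prop :=
  ∃ K : Subgroup G, K ≤ H ∧ K.relIndex H ≠ 0 ∧ Nonempty (K ≃* Multiplicative (Fin m → ℤ))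

/-- `X` is `n`-canonical with respect to abelian groups: no translate of `X` crosses a
nontrivial almost invariant set over a virtually free abelian subgroup of rank at most `n`. -/
def NCanonicalAb (n : ℕ) (X : Set G) : Prop :=
  ∀ (L : Subgroup G) (m : ℕ), m ≤ n → VirtuallyFreeAbelian L m →
    ∀ Z : Set G, AlmostInv L Z → ¬ HFinite L Z → ¬ HFinite L Zᶜ →
      ∀ g : G, ¬ Crosses L Z (leftTr g X)

variable {ι : Type*}

/-- The set `E` of all translates of the sets `X i` and of their complements. -/
def Translates (X : ι → Set G) : Set (Set G) :=
  {U : Set G | ∃ (g : G) (i : ι), U = leftTr g (X i) ∨ U = (leftTr g (X i))ᶜ}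

/-- `W` is small for the element `U` of `E`: `W` is finite over the group `gHᵢg⁻¹`
associated to `U`. -/
def SmallOver (H : ι → Subgroup G) (X : ι → Set G) (U W : Set G) : Prop :=
  ∃ (g : G) (i : ι), (U = leftTr g (X i) ∨ U = (leftTr g (X i))ᶜ) ∧
    HFinite (conjSub g (H i)) W

/-- The four corner sets `U^{(*)} ∩ V^{(*)}`, indexed by pairs of booleans. -/
def corner (U V : Set G) (p : Bool × Bool) : Set G :=
  (cond p.1 U Uᶜ) ∩ (cond p.2 V Vᶜ)

/-- Condition (*): the family is in good position: whenever two of the four corner sets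
of a pair of elements of `E` are small, one of the corner sets is empty. -/
def GoodPosition (H : ι → Subgroup G) (X : ι → Set G) : Prop :=
  ∀ U ∈ Translates X, ∀ V ∈ Translates X,
    ∀ p q : Bool × Bool, p ≠ q →
      SmallOver H X U (corner U V p) → SmallOver H X U (corner U V q) →
        ∃ r : Bool × Bool, corner U V r = ∅

/-- The relation `U ≤ V` on `E`: `U ∩ V*` is empty or is the only small corner set. -/
def eLE (H : ι → Subgroup G) (X : ι → Set G) (U V : Set G) : Prop :=
  U ∩ Vᶜ = ∅ ∨
    (SmallOver H X U (U ∩ Vᶜ) ∧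
      ∀ p : Bool × Bool, p ≠ (true, false) → ¬ SmallOver H X U (corner U V p))

/-- The relation `U < V` on `E`. -/
def eLT (H : ι → Subgroup G) (X : ι → Set G) (U V : Set G) : Prop :=
  eLE H X U V ∧ U ≠ V

/-- `V` crosses the element `U` of `E`: no corner set is small. -/
def CrossesE (H : ι → Subgroup G) (X : ι → Set G) (U V : Set G) : Prop :=
  ∀ p : Bool × Bool, ¬ SmallOver H X U (corner U V p)

/-- `V` crosses the element `U` of `E` strongly. -/
def StronglyCrossesE (S : Finset G) (H : ι → Subgroup G) (X : ι → Set G) (U V : Set G) : Prop :=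
  ∃ (g : G) (i : ι), (U = leftTr g (X i) ∨ U = (leftTr g (X i))ᶜ) ∧
    ¬ HFinite (conjSub g (H i)) (bdry S V ∩ U) ∧ ¬ HFinite (conjSub g (H i)) (bdry S V ∩ Uᶜ)

/-- The relation on `E` generating the cross-connected components of `Ē`: two elements are
related if they coincide, are complementary, or cross. -/
def ccRelSet (H : ι → Subgroup G) (X : ι → Set G) (U V : Set G) : Prop :=
  U ∈ Translates X ∧ V ∈ Translates X ∧ (U = V ∨ U = Vᶜ ∨ CrossesE H X U V)

/-- `U` and `V` determine the same cross-connected component of `Ē`. -/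
def SameCCC (H : ι → Subgroup G) (X : ι → Set G) (U V : Set G) : Prop :=
  Relation.EqvGen (ccRelSet H X) U V

/-- `V̄` lies between `Ū` and `W̄` in `Ē`: some representatives satisfy `u < v < w`. -/
def BetweenBar (H : ι → Subgroup G) (X : ι → Set G) (U V W : Set G) : Prop :=
  ∃ u v w : Set G, (u = U ∨ u = Uᶜ) ∧ (v = V ∨ v = Vᶜ) ∧ (w = W ∨ w = Wᶜ) ∧
    eLT H X u v ∧ eLT H X v w

/-- The setoid on `E` whose classes are the cross-connected components of `Ē`. -/
def cccSetoid (H : ι → Subgroup G) (X : ι → Set G) :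
    Setoid {U : Set G // U ∈ Translates X} where
  r u v := SameCCC H X u.1 v.1
  iseqv := by
    refine ⟨fun u => Relation.EqvGen.refl _, ?_, ?_⟩
    · exact fun h => Relation.EqvGen.symm _ _ h
    · exact fun h₁ h₂ => Relation.EqvGen.trans _ _ _ h₁ h₂

theorem leftTr_leftTr (g g' : G) (X : Set G) : leftTr g (leftTr g' X) = leftTr (g * g') X := by
  simp only [leftTr, Set.image_image, mul_assoc]

theorem leftTr_compl (g : G) (X : Set G) : leftTr g Xᶜ = (leftTr g X)ᶜ :=
  Set.image_compl_eq (Group.mulLeft_bijective g)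

/-- Left translation as a map from `E` to `E`. -/
def translateE (X : ι → Set G) (g : G) (u : {U : Set G // U ∈ Translates X}) :
    {U : Set G // U ∈ Translates X} :=
  ⟨leftTr g u.1, by
    obtain ⟨g', i, h | h⟩ := u.2
    · exact ⟨g * g', i, Or.inl (by rw [h, leftTr_leftTr])⟩
    · exact ⟨g * g', i, Or.inr (by rw [h, leftTr_compl, leftTr_leftTr])⟩⟩

/-- Betweenness for cross-connected components: `B` lies between the distinct components
`A` and `C` if there are elements enclosed by them with `u < v < w`. -/
def BetweenCCC (H : ι → Subgroup G) (X : ι → Set G)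
    (A B C : Quotient (cccSetoid H X)) : Prop :=
  A ≠ B ∧ B ≠ C ∧ A ≠ C ∧
    ∃ u v w : {U : Set G // U ∈ Translates X},
      Quotient.mk (cccSetoid H X) u = A ∧ Quotient.mk (cccSetoid H X) v = B ∧
        Quotient.mk (cccSetoid H X) w = C ∧
        eLT H X u.1 v.1 ∧ eLT H X v.1 w.1

/-- The half-tree `Y_s` determined by the oriented edge `s = (u,v)`: the vertices
reachable from the terminal vertex `v` after deleting the edge `{u,v}`. -/
def halfTree {V : Type*} (T : SimpleGraph V) (u v : V) : Set V :=
  {w : V | (T.deleteEdges {s(u, v)}).Reachable v w}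

/-- With respect to a base vertex `b`, the subset `Z_s` of `G` determined by the
oriented edge `s = (u,v)`. -/
def Zset {V : Type*} [MulAction G V] (T : SimpleGraph V) (b u v : V) : Set G :=
  {g : G | g • b ∈ halfTree T u v}

/-- The vertex `v` encloses the `H`-almost invariant set `A`: for every edge `s`
oriented towards `v`, either `A ∩ Z_s*` or `A* ∩ Z_s*` is `H`-finite. -/
def Encloses {V : Type*} [MulAction G V] (T : SimpleGraph V) (b : V) (H : Subgroup G)
    (v : V) (A : Set G) : Prop :=
  ∀ u : V, T.Adj u v → HFinite H (A ∩ (Zset T b u v)ᶜ) ∨ HFinite H (Aᶜ ∩ (Zset T b u v)ᶜ)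

end Defs

section Aux

variable {G : Type*} [Group G]

lemma hfin_mono {H : Subgroup G} {W W' : Set G} (h : HFinite H W') (hsub : W ⊆ W') :
    HFinite H W := by
  obtain ⟨F, hF⟩ := h
  exact ⟨F, hsub.trans hF⟩

lemma hfin_union {H : Subgroup G} {A B : Set G} (hA : HFinite H A) (hB : HFinite H B) :
    HFinite H (A ∪ B) := by
  classical
  obtain ⟨F₁, h₁⟩ := hA
  obtain ⟨F₂, h₂⟩ := hB
  refine ⟨F₁ ∪ F₂, Set.union_subset (fun x hx => ?_) (fun x hx => ?_)⟩
  · have := h₁ hx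
    simp only [Set.mem_iUnion, exists_prop] at this ⊢
    obtain ⟨d, hd, h⟩ := this
    exact ⟨d, Finset.mem_union_left _ hd, h⟩
  · have := h₂ hx
    simp only [Set.mem_iUnion, exists_prop] at this ⊢
    obtain ⟨d, hd, h⟩ := this
    exact ⟨d, Finset.mem_union_right _ hd, h⟩

lemma hfin_biUnion {H : Subgroup G} {α : Type*} (f : α → Set G) :
    ∀ A : Finset α, (∀ a ∈ A, HFinite H (f a)) → HFinite H (⋃ a ∈ A, f a) := by
  classical
  intro A
  induction A using Finset.induction_on with
  | empty => exact fun _ => ⟨∅, by simp⟩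
  | @insert a A ha ih =>
    intro h
    rw [Finset.set_biUnion_insert]
    exact hfin_union (h a (Finset.mem_insert_self a A))
      (ih fun b hb => h b (Finset.mem_insert_of_mem hb))

lemma mem_leftTr' {g a : G} {X : Set G} : a ∈ leftTr g X ↔ g⁻¹ * a ∈ X := by
  constructor
  · rintro ⟨x, hx, rfl⟩
    simpa using hx
  · intro h
    exact ⟨g⁻¹ * a, h, by simp⟩

lemma prop_ne_congr {P P' Q Q' : Prop} (hp : P ↔ P') (hq : Q ↔ Q') (h : P ≠ Q) : P' ≠ Q' := by
  intro e
  apply h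
  rw [propext hp, propext hq]
  exact e

lemma bdry_leftTr (S : Finset G) (g : G) (X : Set G) :
    bdry S (leftTr g X) = leftTr g (bdry S X) := by
  ext a
  simp only [bdry, Set.mem_setOf_eq, mem_leftTr', mul_assoc]

lemma bdry_hfinite (S : Finset G) {H : Subgroup G} {X : Set G} (hX : AlmostInv H X) :
    HFinite H (bdry S X) := by
  classical
  have key : bdry S X ⊆
      ⋃ s ∈ S, (symmDiff X ((· * s) '' X) ∪ symmDiff X ((· * s⁻¹) '' X)) := by
    intro y hy
    obtain ⟨s, hs, hne⟩ := hy
    have hxor : (y ∈ X ∧ y * s ∉ X) ∨ (y ∉ X ∧ y * s ∈ X) := by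
      by_cases h1 : y ∈ X <;> by_cases h2 : y * s ∈ X
      · exact absurd (propext ⟨fun _ => h2, fun _ => h1⟩) hne
      · exact Or.inl ⟨h1, h2⟩
      · exact Or.inr ⟨h1, h2⟩
      · exact absurd (propext ⟨fun h => (h1 h).elim, fun h => (h2 h).elim⟩) hne
    have hmem : y ∈ symmDiff X ((· * s⁻¹) '' X) := by
      rw [Set.mem_symmDiff]
      rcases hxor with ⟨h1, h2⟩ | ⟨h1, h2⟩
      · refine Or.inl ⟨h1, ?_⟩
        rintro ⟨x, hx, hxy⟩
        apply h2
        have : x = y * s := by rw [← hxy]; simp [mul_assoc]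
        rwa [← this]
      · exact Or.inr ⟨⟨y * s, h2, by simp [mul_assoc]⟩, h1⟩
    rcases hs with hs | hs
    · exact Set.mem_iUnion₂.mpr ⟨s, hs, Set.mem_union_right _ hmem⟩
    · have hs' : s⁻¹ ∈ S := by simpa using hs
      refine Set.mem_iUnion₂.mpr ⟨s⁻¹, hs', Set.mem_union_left _ ?_⟩
      simpa using hmem
  exact hfin_mono (hfin_biUnion _ S (fun s _ => hfin_union (hX.2 s) (hX.2 s⁻¹))) key

lemma exists_word {s : Set G} {x : G} (hx : x ∈ Subgroup.closure s) :
    ∃ l : List G, (∀ y ∈ l, y ∈ s ∪ s⁻¹) ∧ l.prod = x := by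
  have hx' : x ∈ Submonoid.closure (s ∪ s⁻¹) := by
    rw [← Subgroup.closure_toSubmonoid]
    exact hx
  exact Submonoid.exists_list_of_mem_closure hx'

lemma flipB (P : G → Prop) :
    ∀ (l : List G) (a : G), P a → ¬ P (a * l.prod) →
      ∃ p x, (p ++ [x]) <+: l ∧ P (a * p.prod) ∧ ¬ P (a * p.prod * x) := by
  intro l
  induction l with
  | nil =>
    intro a ha hna
    simp only [List.prod_nil, mul_one] at hna
    exact (hna ha).elim
  | cons x t ih =>
    intro a ha hna
    by_cases hx : P (a * x)
    · obtain ⟨p, x', hpre, h1, h2⟩ := ih (a * x) hx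
        (by rwa [List.prod_cons, ← mul_assoc] at hna)
      refine ⟨x :: p, x', ?_, ?_, ?_⟩
      · obtain ⟨r, hr⟩ := hpre
        exact ⟨r, by rw [List.cons_append, List.cons_append, hr]⟩
      · rwa [List.prod_cons, ← mul_assoc]
      · rwa [List.prod_cons, ← mul_assoc]
    · exact ⟨[], x, ⟨t, rfl⟩, by simpa using ha, by simpa using hx⟩

lemma flipA (S : Finset G) (Z : Set G) (a : G) (l : List G)
    (hl : ∀ y ∈ l, y ∈ (S : Set G) ∪ (S : Set G)⁻¹)
    (ha : a ∈ Z) (hb : a * l.prod ∉ Z) :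
    ∃ p, p <+: l ∧ a * p.prod ∈ bdry S Z := by
  obtain ⟨p, x, hpre, h1, h2⟩ := flipB (· ∈ Z) l a ha hb
  have hxl : x ∈ l := hpre.sublist.subset (by simp)
  refine ⟨p, ?_, x, hl x hxl, fun e => h2 (e ▸ h1)⟩
  obtain ⟨r, hr⟩ := hpre
  exact ⟨[x] ++ r, by rw [← List.append_assoc, hr]⟩

lemma chainE (M : Subgroup G) (T : Finset G) (hTM : (T : Set G) ⊆ (M : Set G))
    (P : G → Prop) (g d₁ d₂ : G) :
    ∀ lt : List G, (∀ y ∈ lt, y ∈ (T : Set G) ∪ (T : Set G)⁻¹) →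
      ∀ h₁ ∈ M, P (g * h₁ * d₁) → ¬ P (g * (h₁ * lt.prod) * d₂) →
      ∃ h' ∈ M, ∃ t' ∈ insert (1 : G) ((T : Set G) ∪ (T : Set G)⁻¹),
        ∃ d' ∈ ({d₁, d₂} : Set G), ∃ d'' ∈ ({d₁, d₂} : Set G),
          P (g * h' * d') ∧ ¬ P (g * (h' * t') * d'') := by
  intro lt
  induction lt with
  | nil =>
    intro _ h₁ hm hP hnP
    exact ⟨h₁, hm, 1, Set.mem_insert _ _, d₁, Set.mem_insert _ _,
      d₂, Set.mem_insert_of_mem _ rfl, hP, by simpa using hnP⟩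
  | cons t rest ih =>
    intro hmem h₁ hm hP hnP
    have htT := hmem t List.mem_cons_self
    have htM : t ∈ M := by
      rcases htT with h | h
      · exact hTM h
      · have h' : t⁻¹ ∈ (M : Set G) := hTM (by simpa using h)
        simpa using M.inv_mem h'
    by_cases hPt : P (g * (h₁ * t) * d₁)
    · exact ih (fun y hy => hmem y (List.mem_cons_of_mem _ hy)) (h₁ * t)
        (M.mul_mem hm htM) hPt (by rwa [List.prod_cons, ← mul_assoc h₁ t rest.prod] at hnP)
    · exact ⟨h₁, hm, t, Set.mem_insert_of_mem _ htT, d₁, Set.mem_insert _ _,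
        d₁, Set.mem_insert _ _, hP, hPt⟩

lemma mem_insert_finset_of_set {T : Finset G} {t : G} [DecidableEq G]
    (ht : t ∈ insert (1 : G) ((T : Set G) ∪ (T : Set G)⁻¹)) :
    t ∈ insert (1 : G) (T ∪ T.image (·⁻¹)) := by
  rcases Set.mem_insert_iff.mp ht with rfl | ht'
  · exact Finset.mem_insert_self _ _
  · rcases ht' with h | h
    · exact Finset.mem_insert_of_mem (Finset.mem_union_left _ h)
    · exact Finset.mem_insert_of_mem (Finset.mem_union_right _
        (Finset.mem_image.mpr ⟨t⁻¹, by simpa using h, by simp⟩))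

end Aux


/-- `{g ∈ G : gX and Y are not nested}` consists of finitely many double
cosets `KgH`. -/
theorem stmt3 {G : Type*} [Group G] (hGfg : Group.FG G)
    (H K : Subgroup G) (hH : H.FG) (hK : K.FG)
    (X Y : Set G) (hX : NontrivialAI H X) (hY : NontrivialAI K Y) :
    ∃ F : Finset G, ∀ g : G, ¬ Nested (leftTr g X) Y →
      ∃ k ∈ K, ∃ f ∈ F, ∃ h ∈ H, g = k * f * h := by
  classical
  obtain ⟨S, hS⟩ := hGfg.out
  obtain ⟨TH, hTH⟩ := hH
  obtain ⟨TK, hTK⟩ := hK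
  have hword : ∀ x : G, ∃ l : List G,
      (∀ y ∈ l, y ∈ (S : Set G) ∪ (S : Set G)⁻¹) ∧ l.prod = x :=
    fun x => exists_word (by rw [hS]; exact Subgroup.mem_top x)
  choose w hw1 hw2 using hword
  obtain ⟨D, hD⟩ := bdry_hfinite S hX.1
  obtain ⟨E, hE⟩ := bdry_hfinite S hY.1
  set QQH : Finset G := (D ×ˢ (insert (1 : G) (TH ∪ TH.image (·⁻¹)) ×ˢ D)).image
      (fun p => p.1⁻¹ * p.2.1 * p.2.2) with hQQH
  set QQK : Finset G := (E ×ˢ (insert (1 : G) (TK ∪ TK.image (·⁻¹)) ×ˢ E)).image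
      (fun p => p.1⁻¹ * p.2.1 * p.2.2) with hQQK
  set B : Finset G := (QQK ∪ QQH).biUnion
      (fun r => ((w r).inits.map List.prod).toFinset) with hBdef
  set Fbig : Finset G := ((E ×ˢ (B ×ˢ D)).image fun p => p.1 * p.2.1 * p.2.2⁻¹) ∪
      ((E ×ˢ (B ×ˢ D)).image fun p => p.1 * p.2.1⁻¹ * p.2.2⁻¹) with hFbig
  have hmemB : ∀ r ∈ QQK ∪ QQH, ∀ p : List G, p <+: w r → p.prod ∈ B := by
    intro r hr p hp
    refine Finset.mem_biUnion.mpr ⟨r, hr, ?_⟩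
    rw [List.mem_toFinset]
    exact List.mem_map.mpr ⟨p, (List.mem_inits _ _).mpr hp, rfl⟩
  refine ⟨Fbig, ?_⟩
  intro g hg
  have hcor : (leftTr g X ∩ Y).Nonempty ∧ (leftTr g X ∩ Yᶜ).Nonempty ∧
      ((leftTr g X)ᶜ ∩ Y).Nonempty ∧ ((leftTr g X)ᶜ ∩ Yᶜ).Nonempty := by
    rw [Nested] at hg
    push_neg at hg
    obtain ⟨a, b, c, d⟩ := hg
    exact ⟨a, b, c, d⟩
  obtain ⟨⟨v11, hv11⟩, ⟨v10, hv10⟩, ⟨v01, hv01⟩, ⟨v00, hv00⟩⟩ := hcor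
  -- Case I: the boundary of Y meets both gX and (gX)ᶜ
  have caseI : ∀ p₁ ∈ bdry S Y, ∀ p₂ ∈ bdry S Y, p₁ ∈ leftTr g X → p₂ ∉ leftTr g X →
      ∃ k ∈ K, ∃ f ∈ Fbig, ∃ h ∈ H, g = k * f * h := by
    intro p₁ hp₁ p₂ hp₂ hin hout
    have h1 := hE hp₁
    have h2 := hE hp₂
    simp only [Set.mem_iUnion, Set.mem_image, SetLike.mem_coe, exists_prop] at h1 h2
    obtain ⟨e₁, he₁, k₁, hk₁, hp₁e⟩ := h1
    obtain ⟨e₂, he₂, k₂, hk₂, hp₂e⟩ := h2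
    have hmem : k₁⁻¹ * k₂ ∈ Subgroup.closure (TK : Set G) := by
      rw [hTK]; exact K.mul_mem (K.inv_mem hk₁) hk₂
    obtain ⟨lt, hlt, hltprod⟩ := exists_word hmem
    have hTKsub : (TK : Set G) ⊆ (K : Set G) := by
      rw [← hTK]; exact Subgroup.subset_closure
    obtain ⟨k', hk', t', ht', e', he', e'', he'', hPY, hPnY⟩ :=
      chainE K TK hTKsub (· ∈ leftTr g X) 1 e₁ e₂ lt hlt k₁ hk₁
        (by rw [one_mul, hp₁e]; exact hin)
        (by rw [one_mul, hltprod, mul_inv_cancel_left, hp₂e]; exact hout)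
    rw [one_mul] at hPY hPnY
    have he'E : e' ∈ E := by
      rcases he' with rfl | he'
      · exact he₁
      · rw [Set.mem_singleton_iff.mp he']; exact he₂
    have he''E : e'' ∈ E := by
      rcases he'' with rfl | he''
      · exact he₁
      · rw [Set.mem_singleton_iff.mp he'']; exact he₂
    have hrQ : e'⁻¹ * t' * e'' ∈ QQK := by
      rw [hQQK]
      exact Finset.mem_image.mpr ⟨(e', t', e''),
        Finset.mem_product.mpr ⟨he'E, Finset.mem_product.mpr
          ⟨mem_insert_finset_of_set ht', he''E⟩⟩, rfl⟩
    have hcr : (k' * e') * (e'⁻¹ * t' * e'') = k' * t' * e'' := by group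
    obtain ⟨p, hpre, hbd⟩ := flipA S (leftTr g X) (k' * e') (w (e'⁻¹ * t' * e''))
      (hw1 _) hPY (by rw [hw2, hcr]; exact hPnY)
    rw [bdry_leftTr] at hbd
    obtain ⟨u, hu, hgu⟩ := hbd
    have h3 := hD hu
    simp only [Set.mem_iUnion, Set.mem_image, SetLike.mem_coe, exists_prop] at h3
    obtain ⟨d, hdD, h, hhH, hhd⟩ := h3
    have hβB : p.prod ∈ B := hmemB _ (Finset.mem_union_left _ hrQ) p hpre
    refine ⟨k', hk', e' * p.prod * d⁻¹, ?_, h⁻¹, H.inv_mem hhH, ?_⟩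
    · rw [hFbig]
      exact Finset.mem_union_left _ (Finset.mem_image.mpr ⟨(e', p.prod, d),
        Finset.mem_product.mpr ⟨he'E, Finset.mem_product.mpr ⟨hβB, hdD⟩⟩, rfl⟩)
    · have hgu' : g * (h * d) = k' * e' * p.prod := by rw [hhd]; exact hgu
      have : g = g * (h * d) * d⁻¹ * h⁻¹ := by group
      rw [this, hgu']
      group
  -- Case II: the boundary of gX meets both Y and Yᶜ
  have caseII : ∀ q₁ q₂ : G, q₁ ∈ bdry S (leftTr g X) → q₂ ∈ bdry S (leftTr g X) →
      q₁ ∈ Y → q₂ ∉ Y → ∃ k ∈ K, ∃ f ∈ Fbig, ∃ h ∈ H, g = k * f * h := by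
    intro q₁ q₂ hq₁b hq₂b hq₁Y hq₂Y
    rw [bdry_leftTr] at hq₁b hq₂b
    obtain ⟨u₁, hu₁, rfl⟩ := hq₁b
    obtain ⟨u₂, hu₂, rfl⟩ := hq₂b
    have h1 := hD hu₁
    have h2 := hD hu₂
    simp only [Set.mem_iUnion, Set.mem_image, SetLike.mem_coe, exists_prop] at h1 h2
    obtain ⟨d₁, hd₁D, h₁, hh₁, hu₁e⟩ := h1
    obtain ⟨d₂, hd₂D, h₂, hh₂, hu₂e⟩ := h2
    have hmem : h₁⁻¹ * h₂ ∈ Subgroup.closure (TH : Set G) := by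
      rw [hTH]; exact H.mul_mem (H.inv_mem hh₁) hh₂
    obtain ⟨lt, hlt, hltprod⟩ := exists_word hmem
    have hTHsub : (TH : Set G) ⊆ (H : Set G) := by
      rw [← hTH]; exact Subgroup.subset_closure
    obtain ⟨h', hh', t', ht', d', hd', d'', hd'', hPY, hPnY⟩ :=
      chainE H TH hTHsub (· ∈ Y) g d₁ d₂ lt hlt h₁ hh₁
        (by rw [mul_assoc, hu₁e]; exact hq₁Y)
        (by rw [hltprod, mul_inv_cancel_left, mul_assoc, hu₂e]; exact hq₂Y)
    have hd'D : d' ∈ D := by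
      rcases hd' with rfl | hd'
      · exact hd₁D
      · rw [Set.mem_singleton_iff.mp hd']; exact hd₂D
    have hd''D : d'' ∈ D := by
      rcases hd'' with rfl | hd''
      · exact hd₁D
      · rw [Set.mem_singleton_iff.mp hd'']; exact hd₂D
    have hrQ : d'⁻¹ * t' * d'' ∈ QQH := by
      rw [hQQH]
      exact Finset.mem_image.mpr ⟨(d', t', d''),
        Finset.mem_product.mpr ⟨hd'D, Finset.mem_product.mpr
          ⟨mem_insert_finset_of_set ht', hd''D⟩⟩, rfl⟩
    have hcr : (g * h' * d') * (d'⁻¹ * t' * d'') = g * (h' * t') * d'' := by group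
    obtain ⟨p, hpre, hbd⟩ := flipA S Y (g * h' * d') (w (d'⁻¹ * t' * d''))
      (hw1 _) hPY (by rw [hw2, hcr]; exact hPnY)
    have h3 := hE hbd
    simp only [Set.mem_iUnion, Set.mem_image, SetLike.mem_coe, exists_prop] at h3
    obtain ⟨e, heE, k, hkK, hke⟩ := h3
    have hβB : p.prod ∈ B := hmemB _ (Finset.mem_union_right _ hrQ) p hpre
    refine ⟨k, hkK, e * p.prod⁻¹ * d'⁻¹, ?_, h'⁻¹, H.inv_mem hh', ?_⟩
    · rw [hFbig]
      exact Finset.mem_union_right _ (Finset.mem_image.mpr ⟨(e, p.prod, d'),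
        Finset.mem_product.mpr ⟨heE, Finset.mem_product.mpr ⟨hβB, hd'D⟩⟩, rfl⟩)
    · have : g = (g * h' * d' * p.prod) * p.prod⁻¹ * d'⁻¹ * h'⁻¹ := by group
      rw [this, ← hke]
      group
  -- flips inside corners
  have cornerFlip : ∀ (C : Set G) (v b : G), v ∈ C → b ∉ C →
      ∃ c s, s ∈ (S : Set G) ∪ (S : Set G)⁻¹ ∧ c ∈ C ∧ c * s ∉ C := by
    intro C v b hv hb
    obtain ⟨p, x, hpre, h1, h2⟩ := flipB (· ∈ C) (w (v⁻¹ * b)) v hv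
      (by rw [hw2, mul_inv_cancel_left]; exact hb)
    exact ⟨v * p.prod, x, hw1 _ x (hpre.sublist.subset (by simp)), h1, h2⟩
  -- case split
  by_cases hsplit : (∃ p ∈ bdry S Y, p ∈ leftTr g X) ∧ (∃ p ∈ bdry S Y, p ∉ leftTr g X)
  · obtain ⟨⟨p₁, hp₁, h1⟩, ⟨p₂, hp₂, h2⟩⟩ := hsplit
    exact caseI p₁ hp₁ p₂ hp₂ h1 h2
  · rw [not_and_or] at hsplit
    push_neg at hsplit
    rcases hsplit with hside | hside
    · -- bdry S Y ⊆ (gX)ᶜ ; use corners gX ∩ Y and gX ∩ Yᶜ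
      obtain ⟨c, s, hsS, hc, hcs⟩ := cornerFlip (leftTr g X ∩ Y) v11 v01 hv11
        (fun hmem => hv01.1 hmem.1)
      have hcsY : c * s ∈ Y := by
        by_contra hcsY
        exact hside c ⟨s, hsS, fun e => hcsY (e ▸ hc.2)⟩ hc.1
      have hcsX : c * s ∉ leftTr g X := fun hmem => hcs ⟨hmem, hcsY⟩
      have hq₁ : c ∈ bdry S (leftTr g X) := ⟨s, hsS, fun e => hcsX (e ▸ hc.1)⟩
      obtain ⟨c', s', hsS', hc', hcs'⟩ := cornerFlip (leftTr g X ∩ Yᶜ) v10 v00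
        hv10 (fun hmem => hv00.1 hmem.1)
      have hcs'Y : c' * s' ∉ Y := by
        intro hcs'Y
        exact hside c' ⟨s', hsS', fun e => hc'.2 (e.symm ▸ hcs'Y)⟩ hc'.1
      have hcs'X : c' * s' ∉ leftTr g X := fun hmem => hcs' ⟨hmem, hcs'Y⟩
      have hq₂ : c' ∈ bdry S (leftTr g X) := ⟨s', hsS', fun e => hcs'X (e ▸ hc'.1)⟩
      exact caseII c c' hq₁ hq₂ hc.2 hc'.2
    · -- bdry S Y ⊆ gX ; use corners (gX)ᶜ ∩ Y and (gX)ᶜ ∩ Yᶜ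
      obtain ⟨c, s, hsS, hc, hcs⟩ := cornerFlip ((leftTr g X)ᶜ ∩ Y) v01 v11
        hv01 (fun hmem => hmem.1 hv11.1)
      have hcsY : c * s ∈ Y := by
        by_contra hcsY
        exact hc.1 (hside c ⟨s, hsS, fun e => hcsY (e ▸ hc.2)⟩)
      have hcsX : c * s ∈ leftTr g X := by
        by_contra hcsX
        exact hcs ⟨hcsX, hcsY⟩
      have hq₁ : c ∈ bdry S (leftTr g X) :=
        ⟨s, hsS, fun e => (hc.1 : c ∉ leftTr g X) (e.symm ▸ hcsX)⟩
      obtain ⟨c', s', hsS', hc', hcs'⟩ := cornerFlip ((leftTr g X)ᶜ ∩ Yᶜ) v00 v10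
        hv00 (fun hmem => hmem.1 hv10.1)
      have hcs'Y : c' * s' ∉ Y := by
        intro hcs'Y
        exact hc'.1 (hside c' ⟨s', hsS', fun e => hc'.2 (e.symm ▸ hcs'Y)⟩)
      have hcs'X : c' * s' ∈ leftTr g X := by
        by_contra hcs'X
        exact hcs' ⟨hcs'X, hcs'Y⟩
      have hq₂ : c' ∈ bdry S (leftTr g X) :=
        ⟨s', hsS', fun e => (hc'.1 : c' ∉ leftTr g X) (e.symm ▸ hcs'X)⟩
      exact caseII c c' hq₁ hq₂ hc.2 hc'.2
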